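/- For any deterministic Moore machine $q$ with input alphabet of size at least 2 and output alphabet of size at least 2, and any finite input sequence $\vec{\imath}$, there exists a Moore machine $q_I$ over the same alphabets such that (1) $q_I$ produces exactly the same output sequence as $q$ on $\vec{\imath}$, and (2) $q_I$ has interference: there exist two input sequences of equal length whose corresponding output sequences differ. -/

import Mathlib

/-- A deterministic Moore machine with state space `S`, input alphabet `I`,
output alphabet `O`. -/
structure Moore (S I O : Type*) where
  s0 : S
  tr : S → I → S
  out : S → O

/-- Output sequence produced from state `s` on an input sequence. -/
def Moore.run {S I O : Type*} (q : Moore S I O) : S → List I → List O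
  | s, [] => [q.out s]
  | s, i :: is => q.out s :: Moore.run q (q.tr s i) is

/-- Output sequence from the initial state. -/
def Moore.exec {S I O : Type*} (q : Moore S I O) (is : List I) : List O :=
  q.run q.s0 is

def Moore.goto {S I O : Type*} (q : Moore S I O) : S → List I → S
  | s, [] => s
  | s, i :: is => Moore.goto q (q.tr s i) is

lemma Moore.run_ne_nil {S I O : Type*} (q : Moore S I O) (s : S) (l : List I) :
    q.run s l ≠ [] := by
  cases l <;> simp [Moore.run]

lemma Moore.run_append {S I O : Type*} (q : Moore S I O) (s : S) (l1 l2 : List I) :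
    q.run s (l1 ++ l2) = (q.run s l1).dropLast ++ q.run (q.goto s l1) l2 := by
  induction l1 generalizing s with
  | nil => simp [Moore.run, Moore.goto]
  | cons i l ih =>
    simp only [List.cons_append, Moore.run, Moore.goto]
    rw [List.dropLast_cons_of_ne_nil (Moore.run_ne_nil q _ l)]
    simp [ih]

lemma Moore.run_length {S I O : Type*} (q : Moore S I O) (s : S) (l : List I) :
    (q.run s l).length = l.length + 1 := by
  induction l generalizing s with
  | nil => simp [Moore.run]
  | cons i l ih => simp [Moore.run, ih]

/-- for any finite deterministic Moore machine `q` with at least two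
inputs and two outputs, and any input sequence `is`, there is a finite Moore
machine `qI` over the same alphabets that produces exactly the same output
sequence as `q` on `is` and has interference: two equal-length input sequences
yielding different output sequences. -/
theorem exists_interfering_machine_matching_trace
    {S I O : Type*} [Fintype S] [Fintype I] [Fintype O]
    (hI : 1 < Fintype.card I) (hO : 1 < Fintype.card O)
    (q : Moore S I O) (is : List I) :
    ∃ (S' : Type) (_ : Fintype S') (qI : Moore S' I O),
      qI.exec is = q.exec is ∧
      ∃ is1 is2 : List I, is1.length = is2.length ∧ qI.exec is1 ≠ qI.exec is2 := by
  classical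
  obtain ⟨o1, o2, ho⟩ := Fintype.exists_pair_of_one_lt_card hO
  obtain ⟨i0, i1, hi01⟩ := Fintype.exists_pair_of_one_lt_card hI
  set n := is.length with hn
  set T := q.exec is with hTdef
  have hT : T.length = n + 1 := Moore.run_length q q.s0 is
  let qI : Moore (Fin (n+1) ⊕ Bool) I O :=
    { s0 := Sum.inl ⟨0, Nat.succ_pos n⟩
      tr := fun s i => match s with
        | Sum.inl k =>
            if h : (k : ℕ) < n then
              (if i = is[(k:ℕ)] then Sum.inl ⟨(k:ℕ)+1, Nat.succ_lt_succ h⟩ else Sum.inr true)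
            else Sum.inr (i = i0)
        | Sum.inr b => Sum.inr b
      out := fun s => match s with
        | Sum.inl k => T.getD k o1
        | Sum.inr b => if b then o1 else o2 }
  have key : ∀ (l : List I) (k : ℕ) (hk : k ≤ n), is.drop k = l →
      qI.run (Sum.inl ⟨k, Nat.lt_succ_of_le hk⟩) l = T.drop k ∧
      qI.goto (Sum.inl ⟨k, Nat.lt_succ_of_le hk⟩) l = Sum.inl ⟨n, n.lt_succ_self⟩ := by
    intro l
    induction l with
    | nil =>
      intro k hk hd
      have hkn : k = n := by
        have := congrArg List.length hd
        simp at this; omega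
      subst hkn
      constructor
      · show [qI.out _] = T.drop n
        rw [List.drop_eq_getElem_cons (by omega : n < T.length),
          List.drop_eq_nil_of_le (by omega)]
        show [T.getD n o1] = _
        rw [List.getD_eq_getElem T o1 (by omega)]
      · rfl
    | cons i l ih =>
      intro k hk hd
      have hk' : k < n := by
        have := congrArg List.length hd
        simp at this; omega
      have hget : is[k] = i := by
        rw [List.drop_eq_getElem_cons (by omega : k < is.length)] at hd
        exact (List.cons_eq_cons.mp hd).1
      have hstep : qI.tr (Sum.inl ⟨k, Nat.lt_succ_of_le hk⟩) i
          = Sum.inl ⟨k+1, Nat.lt_succ_of_le hk'⟩ := by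
        show (if h : k < n then _ else _) = _
        rw [dif_pos hk', if_pos hget.symm]
      have hd' : is.drop (k+1) = l := by
        rw [List.drop_eq_getElem_cons (by omega : k < is.length)] at hd
        exact (List.cons_eq_cons.mp hd).2
      obtain ⟨h1, h2⟩ := ih (k+1) hk' hd'
      constructor
      · show qI.out _ :: qI.run (qI.tr _ i) l = T.drop k
        rw [hstep, h1, List.drop_eq_getElem_cons (by omega : k < T.length)]
        congr 1
        show T.getD k o1 = _
        rw [List.getD_eq_getElem T o1 (by omega)]
      · show qI.goto (qI.tr _ i) l = _
        rw [hstep, h2]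
  obtain ⟨hrun, hgoto⟩ := key is 0 (Nat.zero_le n) rfl
  have hexec : qI.exec is = T := by rw [List.drop_zero] at hrun; exact hrun
  refine ⟨Fin (n+1) ⊕ Bool, inferInstance, qI, hexec, is ++ [i0], is ++ [i1], by simp, ?_⟩
  have htr0 : qI.tr (Sum.inl ⟨n, n.lt_succ_self⟩) i0 = Sum.inr true := by
    show (if h : n < n then _ else _) = _
    rw [dif_neg (lt_irrefl n)]
    simp
  have htr1 : qI.tr (Sum.inl ⟨n, n.lt_succ_self⟩) i1 = Sum.inr false := by
    show (if h : n < n then _ else _) = _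
    rw [dif_neg (lt_irrefl n)]
    simp [Ne.symm hi01]
  have e0 : qI.exec (is ++ [i0])
      = (qI.run qI.s0 is).dropLast ++ [qI.out (Sum.inl ⟨n, n.lt_succ_self⟩), o1] := by
    rw [Moore.exec, Moore.run_append, hgoto]
    show _ = _ ++ [_, qI.out (Sum.inr true)]
    rw [← htr0]; rfl
  have e1 : qI.exec (is ++ [i1])
      = (qI.run qI.s0 is).dropLast ++ [qI.out (Sum.inl ⟨n, n.lt_succ_self⟩), o2] := by
    rw [Moore.exec, Moore.run_append, hgoto]
    show _ = _ ++ [_, qI.out (Sum.inr false)]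
    rw [← htr1]; rfl
  rw [e0, e1]
  simp [ho]
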